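/- Fix a positive integer n, let V = {1,…,n}, E the set of two-element subsets of V, and let A = (a_{ij})_{{i,j}∈E} be real numbers such that every CAT(0) space Y satisfies 0 ≤ Σ_{{i,j}∈E} a_{ij} d_Y(y_i,y_j)² for all y_1,…,y_n ∈ Y. Let E₊(A) be the set of {i,j} ∈ E with a_{ij} > 0 and G_A = (V, E₊(A)). If a metric space X satisfies the G_A(0)-property, then X satisfies 0 ≤ Σ_{{i,j}∈E} a_{ij} d_X(x_i,x_j)² for all x_1,…,x_n ∈ X. -/

import Mathlib

noncomputable section

/-- `γ : ℝ → X` is a geodesic from `x` to `y`, parametrized on `[0, dist x y]`. -/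
def IsGeodesicFromTo {X : Type*} [MetricSpace X] (γ : ℝ → X) (x y : X) : Prop :=
  γ 0 = x ∧ γ (dist x y) = y ∧
    ∀ s ∈ Set.Icc (0:ℝ) (dist x y), ∀ t ∈ Set.Icc (0:ℝ) (dist x y),
      dist (γ s) (γ t) = |s - t|

/-- A CAT(0) space. -/
def IsCAT0Space (X : Type*) [MetricSpace X] : Prop :=
  (∀ x y : X, ∃ γ : ℝ → X, IsGeodesicFromTo γ x y) ∧
  ∀ x y z : X, ∀ γ : ℝ → X, IsGeodesicFromTo γ x y → ∀ t ∈ Set.Icc (0:ℝ) 1,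
    dist z (γ (t * dist x y)) ^ 2
      ≤ (1 - t) * dist x z ^ 2 + t * dist y z ^ 2 - t * (1 - t) * dist x y ^ 2

/-- A metric space `X` satisfies the `G(0)`-property for a graph `G`. -/
def SatisfiesG0 (X : Type*) [MetricSpace X] {V : Type*} (G : SimpleGraph V) : Prop :=
  ∀ f : V → X, ∃ (Y : Type) (_ : MetricSpace Y) (g : V → Y), IsCAT0Space Y ∧
    ∀ u v : V,
      (G.Adj u v → dist (g u) (g v) ≤ dist (f u) (f v)) ∧
      (¬ G.Adj u v → dist (f u) (f v) ≤ dist (g u) (g v))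

/-- The graph `G_A` associated to a family of coefficients `a`, where `a i j` for `i < j`
is the coefficient of the pair `{i,j}`: its edges are the pairs with positive coefficient. -/
def coeffGraph (n : ℕ) (a : Fin n → Fin n → ℝ) : SimpleGraph (Fin n) where
  Adj i j := (i < j ∧ 0 < a i j) ∨ (j < i ∧ 0 < a j i)
  symm := ⟨by intro i j h; tauto⟩
  loopless := ⟨by intro i h; rcases h with ⟨h, -⟩ | ⟨h, -⟩ <;> exact lt_irrefl i h⟩

/-- Lemma 1.11: if every CAT(0) space satisfies the `(a_{ij})`-quadratic metric inequality
and `X` satisfies the `G_A(0)`-property for the associated graph `G_A`, then `X` satisfies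
the `(a_{ij})`-quadratic metric inequality. -/
theorem g0_implies_quadratic (n : ℕ) (hn : 0 < n) (a : Fin n → Fin n → ℝ)
    (hCAT : ∀ (Y : Type) [MetricSpace Y], IsCAT0Space Y → ∀ y : Fin n → Y,
      0 ≤ ∑ p ∈ Finset.univ.filter (fun p : Fin n × Fin n => p.1 < p.2),
            a p.1 p.2 * dist (y p.1) (y p.2) ^ 2)
    (X : Type*) [MetricSpace X] (hX : SatisfiesG0 X (coeffGraph n a)) :
    ∀ x : Fin n → X,
      0 ≤ ∑ p ∈ Finset.univ.filter (fun p : Fin n × Fin n => p.1 < p.2),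
            a p.1 p.2 * dist (x p.1) (x p.2) ^ 2 := by
  intro x
  obtain ⟨Y, _, g, hY, hg⟩ := hX x
  refine le_trans (hCAT Y hY g) (Finset.sum_le_sum ?_)
  intro p hp
  rw [Finset.mem_filter] at hp
  have hlt : p.1 < p.2 := hp.2
  by_cases ha : 0 < a p.1 p.2
  · have hadj : (coeffGraph n a).Adj p.1 p.2 := Or.inl ⟨hlt, ha⟩
    have h := (hg p.1 p.2).1 hadj
    have := pow_le_pow_left₀ dist_nonneg h 2
    nlinarith
  · have hnadj : ¬ (coeffGraph n a).Adj p.1 p.2 := by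
      rintro (⟨-, h⟩ | ⟨h, -⟩)
      · exact ha h
      · exact absurd hlt (asymm h)
    have h := (hg p.1 p.2).2 hnadj
    have := pow_le_pow_left₀ dist_nonneg h 2
    nlinarith
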